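/- Let d ≥ 3 be an integer, 0 < b < 2, and (4−2b)/d < σ < (4−2b)/(d−2) (so that dσ + 2b > 4). Let E₀ ∈ ℝ, m > 0, C > 0, and define f : (−∞, 16E₀] → ℝ by f(x) := −x/(2dσ+4b−8) + (2dσ+4b)E₀/(dσ+2b−4) − ( (σ+2)(16E₀−x)/(4dσ+8b−16) )^{4/(dσ+2b)} / ( C^{4/(dσ+2b)} m^{(4−2b−(d−2)σ)/(dσ+2b)} ). Then there is a unique x₀ < 16E₀ such that 1/(2dσ+4b−8) = (4/(dσ+2b)) ((σ+2)/(4dσ+8b−16))^{4/(dσ+2b)} (16E₀−x₀)^{(4−dσ−2b)/(dσ+2b)} / ( C^{4/(dσ+2b)} m^{(4−2b−(d−2)σ)/(dσ+2b)} ); the function f is strictly decreasing on (−∞, x₀) and strictly increasing on (x₀, 16E₀], and f(x₀) = x₀/8. -/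

import Mathlib

open MeasureTheory Filter Complex ComplexConjugate

noncomputable section

abbrev Ed (d : ℕ) : Type := EuclideanSpace ℝ (Fin d)

variable {d : ℕ} {F : Type*} [NormedAddCommGroup F] [NormedSpace ℝ F]

/-- The `j`-th partial derivative. -/
def pd (f : Ed d → F) (j : Fin d) (x : Ed d) : F :=
  fderiv ℝ f x (EuclideanSpace.single j 1)

/-- `|∇f(x)|²`. -/
def gradSq (f : Ed d → F) (x : Ed d) : ℝ :=
  ∑ j : Fin d, ‖pd f j x‖ ^ 2

/-- The Laplacian. -/
def lap (f : Ed d → F) (x : Ed d) : F :=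
  ∑ j : Fin d, pd (pd f j) j x

/-- The mass `M(f) = ∫ |f|²`. -/
def Mass (f : Ed d → F) : ℝ := ∫ x : Ed d, ‖f x‖ ^ 2

/-- The potential energy `P(f) = ∫ |x|^{-b} |f|^{σ+2}`. -/
def Pot (b σ : ℝ) (f : Ed d → F) : ℝ := ∫ x : Ed d, ‖x‖ ^ (-b) * ‖f x‖ ^ (σ + 2)

/-- The squared `Ḣ_c¹` norm. -/
def HcSq (c : ℝ) (f : Ed d → F) : ℝ :=
  ∫ x : Ed d, gradSq f x + c * ‖x‖ ^ (-2 : ℝ) * ‖f x‖ ^ 2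

/-- The energy `E(f)`. -/
def En (b σ c : ℝ) (f : Ed d → F) : ℝ := HcSq c f / 2 - Pot b σ f / (σ + 2)

/-- The virial functional `G(f)`. -/
def Gfun (b σ c : ℝ) (f : Ed d → F) : ℝ :=
  HcSq c f - (((d : ℝ) * σ + 2 * b) / (2 * (σ + 2))) * Pot b σ f

/-- A positive ground state solution of `P_c Q + Q - |x|^{-b} Q^{σ+1} = 0`. -/
def IsGroundState (b σ c : ℝ) (Q : Ed d → ℝ) : Prop :=
  (∀ x, 0 < Q x) ∧ ContDiffOn ℝ 2 Q {x : Ed d | x ≠ 0} ∧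
    Integrable (fun x : Ed d => ‖Q x‖ ^ 2) ∧ Integrable (gradSq Q) ∧
    ∀ x : Ed d, x ≠ 0 →
      -lap Q x + c * ‖x‖ ^ (-2 : ℝ) * Q x + Q x - ‖x‖ ^ (-b) * Q x ^ (σ + 1) = 0


/-- The auxiliary function `f` arising from the differential inequality for the variance
above the ground state threshold. -/
def auxF (d : ℕ) (b σ E₀ C m x : ℝ) : ℝ :=
  -x / (2 * (d : ℝ) * σ + 4 * b - 8) + (2 * (d : ℝ) * σ + 4 * b) * E₀ / ((d : ℝ) * σ + 2 * b - 4)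
    - ((σ + 2) * (16 * E₀ - x) / (4 * (d : ℝ) * σ + 8 * b - 16)) ^
        ((4 : ℝ) / ((d : ℝ) * σ + 2 * b)) /
      (C ^ ((4 : ℝ) / ((d : ℝ) * σ + 2 * b)) *
        m ^ ((4 - 2 * b - ((d : ℝ) - 2) * σ) / ((d : ℝ) * σ + 2 * b)))

/-- The equation characterizing the critical point `x₀` of `auxF`. -/
def critEq (d : ℕ) (b σ E₀ C m x : ℝ) : Prop :=
  1 / (2 * (d : ℝ) * σ + 4 * b - 8) =
    ((4 : ℝ) / ((d : ℝ) * σ + 2 * b)) *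
        ((σ + 2) / (4 * (d : ℝ) * σ + 8 * b - 16)) ^ ((4 : ℝ) / ((d : ℝ) * σ + 2 * b)) *
        (16 * E₀ - x) ^ ((4 - (d : ℝ) * σ - 2 * b) / ((d : ℝ) * σ + 2 * b)) /
      (C ^ ((4 : ℝ) / ((d : ℝ) * σ + 2 * b)) *
        m ^ ((4 - 2 * b - ((d : ℝ) - 2) * σ) / ((d : ℝ) * σ + 2 * b)))

/-- The auxiliary function `f` has a unique critical point `x₀ < 16E₀`,
characterized by `critEq`; `f` is strictly decreasing on `(-∞, x₀)`, strictly increasing on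
`(x₀, 16E₀]`, and `f(x₀) = x₀/8`. -/
theorem stmt18 (d : ℕ) (hd : 3 ≤ d) (b σ : ℝ)
    (hb : 0 < b) (hb2 : b < 2)
    (hσ1 : (4 - 2 * b) / (d : ℝ) < σ) (hσ2 : σ < (4 - 2 * b) / ((d : ℝ) - 2))
    (E₀ m C : ℝ) (hm : 0 < m) (hC : 0 < C) :
    ∃ x₀ : ℝ, x₀ < 16 * E₀ ∧ critEq d b σ E₀ C m x₀ ∧
      (∀ y : ℝ, y < 16 * E₀ → critEq d b σ E₀ C m y → y = x₀) ∧
      StrictAntiOn (auxF d b σ E₀ C m) (Set.Iio x₀) ∧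
      StrictMonoOn (auxF d b σ E₀ C m) (Set.Ioc x₀ (16 * E₀)) ∧
      auxF d b σ E₀ C m x₀ = x₀ / 8 := by
  -- Basic positivity facts
  have hd3 : (3:ℝ) ≤ (d:ℝ) := by exact_mod_cast hd
  have hdpos : (0:ℝ) < (d:ℝ) := by linarith
  have hσpos : 0 < σ := lt_trans (div_pos (by linarith) hdpos) hσ1
  have hs4 : 4 < (d:ℝ) * σ + 2 * b := by
    have h := (div_lt_iff₀ hdpos).mp hσ1
    linarith [mul_comm σ (d:ℝ)]
  set s : ℝ := (d:ℝ) * σ + 2 * b with hs_def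
  have hspos : 0 < s := by linarith
  set α : ℝ := 4 / s with hα_def
  have hα0 : 0 < α := by positivity
  have hα1 : α < 1 := by rw [hα_def, div_lt_one hspos]; linarith
  have h1α : (1:ℝ) - α ≠ 0 := ne_of_gt (by linarith)
  set B : ℝ := (σ + 2) / (4 * (s - 4)) with hB_def
  have hB : 0 < B := div_pos (by linarith) (by linarith)
  set A : ℝ := C ^ α * m ^ ((4 - 2 * b - ((d:ℝ) - 2) * σ) / s) with hA_def
  have hA : 0 < A := mul_pos (Real.rpow_pos_of_pos hC _) (Real.rpow_pos_of_pos hm _)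
  set D : ℝ := 2 * (s - 4) with hD_def
  have hD : 0 < D := by rw [hD_def]; linarith
  set c : ℝ := α * B ^ α / A with hc_def
  have hc : 0 < c := div_pos (mul_pos hα0 (Real.rpow_pos_of_pos hB _)) hA
  set K : ℝ := 2 * s * E₀ / (s - 4) with hK_def
  set g : ℝ → ℝ := fun x => -x / D + K - (B * (16 * E₀ - x)) ^ α / A with hg_def
  -- auxF equals g
  have hfeq : auxF d b σ E₀ C m = g := by
    funext x
    show auxF d b σ E₀ C m x = -x / D + K - (B * (16 * E₀ - x)) ^ α / A
    unfold auxF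
    rw [show (σ + 2) * (16 * E₀ - x) / (4 * (d:ℝ) * σ + 8 * b - 16)
        = B * (16 * E₀ - x) by rw [hB_def, hs_def]; ring,
      show 2 * (d:ℝ) * σ + 4 * b - 8 = D by rw [hD_def, hs_def]; ring,
      show (2 * (d:ℝ) * σ + 4 * b) * E₀ / ((d:ℝ) * σ + 2 * b - 4) = K by
        rw [hK_def, hs_def]; ring_nf]
  -- critEq is equivalent to the simplified form
  have hcrit : ∀ x : ℝ, critEq d b σ E₀ C m x ↔ 1 / D = c * (16 * E₀ - x) ^ (α - 1) := by
    intro x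
    unfold critEq
    rw [show (σ + 2) / (4 * (d:ℝ) * σ + 8 * b - 16) = B by rw [hB_def, hs_def]; ring_nf,
      show 2 * (d:ℝ) * σ + 4 * b - 8 = D by rw [hD_def, hs_def]; ring,
      show (4 - (d:ℝ) * σ - 2 * b) / ((d:ℝ) * σ + 2 * b) = α - 1 by
        rw [hα_def, hs_def]; field_simp; ring,
      hc_def,
      show (4:ℝ) / ((d:ℝ) * σ + 2 * b) = α by rw [hα_def, hs_def],
      show C ^ α * m ^ ((4 - 2 * b - ((d:ℝ) - 2) * σ) / ((d:ℝ) * σ + 2 * b)) = A by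
        rw [hA_def, hs_def]]
    constructor <;> intro h <;> rw [h] <;> ring
  -- the critical point
  set u₀ : ℝ := (D * c) ^ (1 / (1 - α)) with hu₀_def
  have hu₀ : 0 < u₀ := Real.rpow_pos_of_pos (mul_pos hD hc) _
  have hu₀key : u₀ ^ (α - 1) = (D * c)⁻¹ := by
    rw [hu₀_def, ← Real.rpow_mul (mul_pos hD hc).le,
      show 1 / (1 - α) * (α - 1) = -1 by field_simp; ring, Real.rpow_neg_one]
  have hkey : 1 / D = c * u₀ ^ (α - 1) := by
    rw [hu₀key, mul_inv, mul_comm]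
    rw [mul_assoc, inv_mul_cancel₀ hc.ne', mul_one, one_div]
  set x₀ : ℝ := 16 * E₀ - u₀ with hx₀_def
  have hx₀lt : x₀ < 16 * E₀ := by rw [hx₀_def]; linarith
  have hux : 16 * E₀ - x₀ = u₀ := by rw [hx₀_def]; ring
  -- derivative of g
  have hder : ∀ x : ℝ, x < 16 * E₀ →
      HasDerivAt g (-(1 / D) + c * (16 * E₀ - x) ^ (α - 1)) x := by
    intro x hx
    have hu : 0 < 16 * E₀ - x := by linarith
    have h1 : HasDerivAt (fun y : ℝ => B * (16 * E₀ - y)) (B * (-1)) x :=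
      ((hasDerivAt_id x).const_sub (16 * E₀)).const_mul B
    have h2 : HasDerivAt (fun u : ℝ => u ^ α)
        (α * (B * (16 * E₀ - x)) ^ (α - 1)) (B * (16 * E₀ - x)) :=
      Real.hasDerivAt_rpow_const (Or.inl (by positivity))
    have h3 := (h2.comp x h1).div_const A
    have h4 : HasDerivAt (fun y : ℝ => -y / D + K) (-(1 / D)) x := by
      have := (((hasDerivAt_id x).neg).div_const D).add_const K
      exact this.congr_deriv (by ring)
    have h5 := h4.sub h3
    refine h5.congr_deriv ?_
    symm
    have hBpow : B ^ α = B ^ (α - 1) * B := by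
      rw [← Real.rpow_add_one hB.ne' (α - 1)]
      congr 1
      ring
    rw [Real.mul_rpow hB.le hu.le, hc_def]
    field_simp
    linear_combination (α * (16 * E₀ - x) ^ (α - 1) * D) * hBpow
  -- continuity of g
  have hcont : Continuous g := by
    have h1 : Continuous fun x : ℝ => (B * (16 * E₀ - x)) ^ α := by
      apply continuous_iff_continuousAt.mpr
      intro x
      exact (Real.continuousAt_rpow_const _ _ (Or.inr hα0.le)).comp (by fun_prop)
    rw [hg_def]
    exact ((continuous_id.neg.div_const D).add continuous_const).sub (h1.div_const A)
  refine ⟨x₀, hx₀lt, ?_, ?_, ?_, ?_, ?_⟩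
  · rw [hcrit, hux]; exact hkey
  · intro y hy hyc
    rw [hcrit] at hyc
    have h1 : c * (16 * E₀ - y) ^ (α - 1) = c * u₀ ^ (α - 1) := by
      rw [← hyc, hkey]
    have h2 : (16 * E₀ - y) ^ (α - 1) = u₀ ^ (α - 1) :=
      mul_left_cancel₀ hc.ne' h1
    have huy : 0 < 16 * E₀ - y := by linarith
    have h3 : 16 * E₀ - y = u₀ := by
      rcases lt_trichotomy (16 * E₀ - y) u₀ with h | h | h
      · exact absurd h2 (ne_of_gt (Real.rpow_lt_rpow_of_neg huy h (by linarith)))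
      · exact h
      · exact absurd h2 (ne_of_lt (Real.rpow_lt_rpow_of_neg hu₀ h (by linarith)))
    rw [hx₀_def]; linarith
  · rw [hfeq]
    apply strictAntiOn_of_deriv_neg (convex_Iio x₀) hcont.continuousOn
    intro x hx
    rw [interior_Iio] at hx
    have hx' : x < x₀ := hx
    have hxlt : x < 16 * E₀ := lt_trans hx' hx₀lt
    rw [(hder x hxlt).deriv]
    have hulg : u₀ < 16 * E₀ - x := by rw [hx₀_def] at hx'; linarith
    have : (16 * E₀ - x) ^ (α - 1) < u₀ ^ (α - 1) :=
      Real.rpow_lt_rpow_of_neg hu₀ hulg (by linarith)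
    have hlt : c * (16 * E₀ - x) ^ (α - 1) < c * u₀ ^ (α - 1) :=
      (mul_lt_mul_iff_right₀ hc).mpr this
    rw [← hkey] at hlt
    linarith
  · rw [hfeq]
    apply strictMonoOn_of_deriv_pos (convex_Ioc x₀ (16 * E₀)) hcont.continuousOn
    intro x hx
    rw [interior_Ioc] at hx
    obtain ⟨hx1, hx2⟩ := hx
    rw [(hder x hx2).deriv]
    have hu : 0 < 16 * E₀ - x := by linarith
    have hulg : 16 * E₀ - x < u₀ := by rw [hx₀_def] at hx1; linarith
    have : u₀ ^ (α - 1) < (16 * E₀ - x) ^ (α - 1) :=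
      Real.rpow_lt_rpow_of_neg hu hulg (by linarith)
    have hlt : c * u₀ ^ (α - 1) < c * (16 * E₀ - x) ^ (α - 1) :=
      (mul_lt_mul_iff_right₀ hc).mpr this
    rw [← hkey] at hlt
    linarith
  · rw [hfeq]
    show -x₀ / D + K - (B * (16 * E₀ - x₀)) ^ α / A = x₀ / 8
    rw [hux, Real.mul_rpow hB.le hu₀.le]
    have hupow : u₀ ^ α = u₀ ^ (α - 1) * u₀ := by
      rw [← Real.rpow_add_one hu₀.ne' (α - 1)]
      congr 1
      ring
    have hBA : B ^ α = c * A / α := by rw [hc_def]; field_simp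
    rw [hupow, hBA, hu₀key]
    have hs4' : s - 4 ≠ 0 := by linarith
    rw [hK_def, hD_def, hx₀_def, hα_def, hc_def]
    field_simp
    ring


end
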